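/- arXiv:2012.08936 — 2 statements merged into one kernel-verified Lean document; each statement's English description precedes it below -/
import Mathlib

section
/- Let T be a densely defined symmetric operator on L²(X,m) such that every element of ker T̄ is (a.e. equal to) a constant function. If T satisfies the L²-Liouville property (every f ∈ ker T* is constant), T is strictly positive, and m(X) = ∞, then T is essentially self-adjoint. -/
open LinearPMap MeasureTheory InnerProductSpace RealInnerProductSpace
open scoped ENNReal

variable {X : Type*} [MeasurableSpace X]

/-- An element of `L²(X, μ)` is (a.e. equal to) a constant function. -/
def IsAEConstant {μ : Measure X} (f : Lp ℝ 2 μ) : Prop :=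
  ∃ c : ℝ, ∀ᵐ x ∂μ, (f : X →ₘ[μ] ℝ) x = c

/-- In an infinite measure space, the only a.e. constant element of `L²` is `0`. -/
theorem IsAEConstant.eq_zero {μ : Measure X} {f : Lp ℝ 2 μ}
    (hf : IsAEConstant f) (hinf : μ Set.univ = ∞) : f = 0 := by
  obtain ⟨c, hc⟩ := hf
  have hmem : MemLp (fun _ : X => c) 2 μ := (Lp.memLp f).ae_eq hc
  have hc0 : c = 0 := by
    rcases (memLp_const_iff (p := 2) (by norm_num) (by norm_num)).mp hmem with h | h
    · exact h
    · rw [hinf] at h; exact absurd h (lt_irrefl _)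
  have h0 : (↑↑f : X → ℝ) =ᵐ[μ] (0 : X → ℝ) := by
    filter_upwards [hc] with x hx
    simp [hx, hc0]
  exact Lp.ext (h0.trans (Lp.coeFn_zero (E := ℝ) (p := 2) (μ := μ)).symm)

set_option maxHeartbeats 1000000 in
set_option synthInstance.maxHeartbeats 1000000 in
/-- Let `T` be a densely defined symmetric operator on `L²(X, μ)` such that
every element of the kernel of its closure is a.e. constant.  If `T` satisfies the
`L²`-Liouville property (every element of `ker T†` is a.e. constant), `T` is strictly
positive and `μ(X) = ∞`, then `T` is essentially self-adjoint. -/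
theorem essentially_selfAdjoint_of_L2_Liouville
    (μ : Measure X)
    (T : Lp ℝ 2 μ →ₗ.[ℝ] Lp ℝ 2 μ)
    (hdense : Dense (T.domain : Set (Lp ℝ 2 μ)))
    (hsymm : ∀ x y : T.domain, ⟪T x, (y : Lp ℝ 2 μ)⟫ = ⟪(x : Lp ℝ 2 μ), T y⟫)
    (hclos : ∀ f : T.closure.domain, T.closure f = 0 → IsAEConstant (f : Lp ℝ 2 μ))
    (hLiouville : ∀ f : T.adjoint.domain, T.adjoint f = 0 → IsAEConstant (f : Lp ℝ 2 μ))
    (hpos : ∃ C : ℝ, 0 < C ∧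
      ∀ f : T.domain, C * ‖(f : Lp ℝ 2 μ)‖ ^ 2 ≤ ⟪T f, (f : Lp ℝ 2 μ)⟫)
    (hinf : μ Set.univ = ∞) :
    IsSelfAdjoint T.closure := by
  set H := Lp ℝ 2 μ
  obtain ⟨C, hC, hposT⟩ := hpos
  -- T is a formal adjoint of itself, hence `T ≤ T†`.
  have hTle : T ≤ T.adjoint := LinearPMap.IsFormalAdjoint.le_adjoint hdense hsymm
  -- The graph of the adjoint is closed.
  have hadj_graph : (T.adjoint.graph : Set (H × H)) =
      ⋂ x : T.domain, {p : H × H | ⟪p.2, (x : H)⟫ = ⟪p.1, T x⟫} := by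
    ext p
    simp only [SetLike.mem_coe, Set.mem_iInter, Set.mem_setOf_eq]
    constructor
    · rintro hp x
      rcases (T.adjoint.mem_graph_iff).mp hp with ⟨y, hy1, hy2⟩
      rw [← hy1, ← hy2]
      exact LinearPMap.adjoint_isFormalAdjoint hdense y x
    · intro hp
      have hmem : p.1 ∈ T.adjoint.domain :=
        T.mem_adjoint_domain_of_exists p.1 ⟨p.2, fun x => hp x⟩
      have : T.adjoint ⟨p.1, hmem⟩ = p.2 :=
        LinearPMap.adjoint_apply_eq hdense ⟨p.1, hmem⟩ fun x => hp x
      rw [T.adjoint.mem_graph_iff]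
      exact ⟨⟨p.1, hmem⟩, rfl, this⟩
  have hadj_closed : T.adjoint.IsClosed := by
    rw [LinearPMap.IsClosed, hadj_graph]
    exact isClosed_iInter fun x => isClosed_eq
      ((Continuous.inner continuous_snd continuous_const))
      ((Continuous.inner continuous_fst continuous_const))
  have hclosable : T.IsClosable :=
    LinearPMap.isClosable_iff_exists_closed_extension.mpr ⟨T.adjoint, hadj_closed, hTle⟩
  have hadj_closure_eq : T.adjoint.closure = T.adjoint := by
    apply LinearPMap.eq_of_eq_graph
    rw [← hadj_closed.isClosable.graph_closure_eq_closure_graph]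
    exact hadj_closed.submodule_topologicalClosure_eq
  have hAle : T.closure ≤ T.adjoint := by
    have := hadj_closed.isClosable.closure_mono hTle
    rwa [hadj_closure_eq] at this
  -- Properties of `T` extend to its closure via closed sets containing the graph.
  have hgraph_sub : ∀ {S : Set (H × H)}, IsClosed S → ((T.graph : Set (H × H)) ⊆ S) →
      ∀ f : T.closure.domain, ((f : H), T.closure f) ∈ S := by
    intro S hS hTS f
    have h1 : ((f : H), T.closure f) ∈ T.closure.graph := T.closure.mem_graph f
    rw [← hclosable.graph_closure_eq_closure_graph] at h1
    have h2 : ((((T.graph).topologicalClosure : Submodule ℝ (H × H)) : Set (H × H))) =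
        closure (T.graph : Set (H × H)) := Submodule.topologicalClosure_coe _
    exact closure_minimal hTS hS (h2 ▸ h1)
  have hext : ∀ (y w : H), (∀ x : T.domain, ⟪w, (x : H)⟫ = ⟪y, T x⟫) →
      ∀ f : T.closure.domain, ⟪w, (f : H)⟫ = ⟪y, T.closure f⟫ := by
    intro y w h f
    refine hgraph_sub (S := {p : H × H | ⟪w, p.1⟫ = ⟪y, p.2⟫})
      (isClosed_eq (Continuous.inner continuous_const continuous_fst)
        (Continuous.inner continuous_const continuous_snd)) ?_ f
    intro p hp
    rcases T.mem_graph_iff.mp hp with ⟨x, hx1, hx2⟩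
    simp only [Set.mem_setOf_eq, ← hx1, ← hx2]
    exact h x
  have hposA : ∀ f : T.closure.domain, C * ‖(f : H)‖ ^ 2 ≤ ⟪T.closure f, (f : H)⟫ := by
    intro f
    refine hgraph_sub (S := {p : H × H | C * ‖p.1‖ ^ 2 ≤ ⟪p.2, p.1⟫}) ?_ ?_ f
    · exact isClosed_le (continuous_const.mul ((continuous_fst.norm).pow 2))
        (Continuous.inner continuous_snd continuous_fst)
    · intro p hp
      rcases T.mem_graph_iff.mp hp with ⟨x, hx1, hx2⟩
      simp only [Set.mem_setOf_eq, ← hx1, ← hx2]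
      exact hposT x
  have hnormA : ∀ f : T.closure.domain, C * ‖(f : H)‖ ≤ ‖T.closure f‖ := by
    intro f
    rcases eq_or_lt_of_le (norm_nonneg (f : H)) with h0 | h0
    · rw [← h0, mul_zero]; exact norm_nonneg _
    · have h1 := hposA f
      have h2 : ⟪T.closure f, (f : H)⟫ ≤ ‖T.closure f‖ * ‖(f : H)‖ := real_inner_le_norm _ _
      nlinarith
  -- The range of the closure.
  set R : Submodule ℝ H := LinearMap.range T.closure.toFun with hR
  have hRorth : Rᗮ = ⊥ := by
    rw [Submodule.eq_bot_iff]
    intro y hy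
    have hy' : ∀ x : T.domain, ⟪(0 : H), (x : H)⟫ = ⟪y, T x⟫ := by
      intro x
      have hx' : (x : H) ∈ T.closure.domain := T.le_closure.1 x.2
      have hmemR : (T x : H) ∈ R := by
        refine ⟨⟨(x : H), hx'⟩, ?_⟩
        exact (T.le_closure.2 (x := x) (y := ⟨(x : H), hx'⟩) rfl).symm
      have := (Submodule.mem_orthogonal R y).mp hy _ hmemR
      rw [inner_zero_left, real_inner_comm] at *
      rw [real_inner_comm]
      simpa using this.symm
    have hymem : y ∈ T.adjoint.domain := T.mem_adjoint_domain_of_exists y ⟨0, hy'⟩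
    have h0 : T.adjoint ⟨y, hymem⟩ = 0 :=
      LinearPMap.adjoint_apply_eq hdense ⟨y, hymem⟩ fun x => hy' x
    exact (hLiouville ⟨y, hymem⟩ h0).eq_zero hinf
  have hRclosed : IsClosed (R : Set H) := by
    refine isClosed_of_closure_subset ?_
    intro g hg
    rcases mem_closure_iff_seq_limit.mp hg with ⟨u, hu_mem, hu_lim⟩
    choose v hv using fun n => hu_mem n
    have hv' : ∀ n, T.closure (v n) = u n := hv
    have hcau : CauchySeq fun n => ((v n : H)) := by
      rw [Metric.cauchySeq_iff]
      intro ε hε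
      rcases Metric.cauchySeq_iff.mp hu_lim.cauchySeq (C * ε) (by positivity) with ⟨N, hN⟩
      refine ⟨N, fun m hm n hn => ?_⟩
      have he : T.closure (v m - v n) = u m - u n := by
        rw [T.closure.map_sub, hv', hv']
      have h1 := hnormA (v m - v n)
      rw [he] at h1
      have hco : ((v m - v n : T.closure.domain) : H) = (v m : H) - (v n : H) := rfl
      rw [hco] at h1
      have h2 := hN m hm n hn
      rw [dist_eq_norm] at h2 ⊢
      exact (mul_lt_mul_iff_right₀ hC).mp (lt_of_le_of_lt h1 h2)
    rcases cauchySeq_tendsto_of_complete hcau with ⟨f, hf⟩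
    have hgraph : (f, g) ∈ T.closure.graph := by
      have hclosedA : IsClosed (T.closure.graph : Set (H × H)) := hclosable.closure_isClosed
      refine hclosedA.mem_of_tendsto (hf.prodMk_nhds hu_lim)
        (Filter.Eventually.of_forall fun n => ?_)
      have hmg : ((v n : H), T.closure (v n)) ∈ T.closure.graph := T.closure.mem_graph (v n)
      rw [hv' n] at hmg
      exact SetLike.mem_coe.mpr hmg
    rcases T.closure.mem_graph_iff.mp hgraph with ⟨yy, _, hy2⟩
    exact ⟨yy, hy2⟩
  have hRtop : R = ⊤ := by
    haveI : CompleteSpace R := hRclosed.completeSpace_coe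
    rw [← Submodule.orthogonal_eq_bot_iff]
    exact hRorth
  -- `T† ≤ T.closure`.
  have key : ∀ y : T.adjoint.domain, ∃ f : T.closure.domain,
      (y : H) = (f : H) ∧ T.adjoint y = T.closure f := by
    intro y
    obtain ⟨f, hf⟩ : T.adjoint y ∈ R := hRtop ▸ Submodule.mem_top
    have hf' : T.closure f = T.adjoint y := hf
    have hfadj : (f : H) ∈ T.adjoint.domain := hAle.1 f.2
    have hfeq : T.adjoint ⟨(f : H), hfadj⟩ = T.closure f :=
      (hAle.2 (x := f) (y := ⟨(f : H), hfadj⟩) rfl).symm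
    have hdiff : T.adjoint (y - ⟨(f : H), hfadj⟩) = 0 := by
      rw [T.adjoint.map_sub, hfeq, ← hf', sub_self]
    have h0 : ((y - ⟨(f : H), hfadj⟩ : T.adjoint.domain) : H) = 0 :=
      (hLiouville _ hdiff).eq_zero hinf
    have hyf : (y : H) = (f : H) := by
      have hco : ((y - ⟨(f : H), hfadj⟩ : T.adjoint.domain) : H) = (y : H) - (f : H) := rfl
      rw [hco] at h0
      exact sub_eq_zero.mp h0
    exact ⟨f, hyf, hf'.symm⟩
  have hadjle : T.adjoint ≤ T.closure := by
    constructor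
    · intro yv hyv
      obtain ⟨f, hf1, _⟩ := key ⟨yv, hyv⟩
      have hyv' : yv = (f : H) := hf1
      exact hyv' ▸ f.2
    · intro x y hxy
      obtain ⟨f, hf1, hf2⟩ := key x
      have hyf : y = f := Subtype.ext (by rw [← hxy, hf1])
      rw [hf2, hyf]
  have hAeq : T.adjoint = T.closure := le_antisymm hadjle hAle
  have hdenseA : Dense (T.closure.domain : Set H) :=
    hdense.mono fun x hx => T.le_closure.1 hx
  have hAadj : T.closure.adjoint = T.adjoint := by
    apply le_antisymm
    · constructor
      · intro y hy
        refine T.mem_adjoint_domain_of_exists y ⟨T.closure.adjoint ⟨y, hy⟩, fun x => ?_⟩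
        have hx' : (x : H) ∈ T.closure.domain := T.le_closure.1 x.2
        have hfa := LinearPMap.adjoint_isFormalAdjoint hdenseA ⟨y, hy⟩ ⟨(x : H), hx'⟩
        rw [hfa, ← T.le_closure.2 (x := x) (y := ⟨(x : H), hx'⟩) rfl]
      · intro x y hxy
        refine (LinearPMap.adjoint_apply_eq hdense y fun v => ?_).symm
        have hv' : (v : H) ∈ T.closure.domain := T.le_closure.1 v.2
        have hfa := LinearPMap.adjoint_isFormalAdjoint hdenseA x ⟨(v : H), hv'⟩
        rw [hfa, ← T.le_closure.2 (x := v) (y := ⟨(v : H), hv'⟩) rfl, hxy]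
    · constructor
      · intro y hy
        exact T.closure.mem_adjoint_domain_of_exists y ⟨T.adjoint ⟨y, hy⟩,
          hext y (T.adjoint ⟨y, hy⟩) fun x =>
            LinearPMap.adjoint_isFormalAdjoint hdense ⟨y, hy⟩ x⟩
      · intro x y hxy
        refine (LinearPMap.adjoint_apply_eq hdenseA y fun v => ?_).symm
        refine hext (y : H) (T.adjoint x) (fun w => ?_) v
        rw [← hxy]
        exact LinearPMap.adjoint_isFormalAdjoint hdense x w
  rw [LinearPMap.isSelfAdjoint_def, hAadj, hAeq]
end

section
/- Let b be the graph on ℕ with edges between consecutive integers, edge weights b(n, n+1) > 0 and measure m. Suppose f : ℕ → ℝ is nonconstant and satisfies Lf(n) = λ f(n) for all n ≥ 1 with λ < 0 (λ-harmonic). If Σ_n 1/b(n,n+1) = ∞ and f is not identically 0, then f is unbounded. -/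
/-- On the half-line graph (vertices `ℕ`, edges between consecutive
integers), let `f` be a nonconstant, nontrivial `λ`-harmonic function with `λ < 0`.
If `Σₙ 1/b(n, n+1) = ∞`, then `f` is unbounded. -/
theorem lambda_harmonic_unbounded_of_reciprocal_weights_not_summable
    (b : ℕ → ℕ → ℝ) (m : ℕ → ℝ) (lam : ℝ) (f : ℕ → ℝ)
    (hb_nonneg : ∀ x y, 0 ≤ b x y)
    (hb_symm : ∀ x y, b x y = b y x)
    (hb_adj : ∀ x y, 0 < b x y ↔ (y = x + 1 ∨ x = y + 1))
    (hm_pos : ∀ x, 0 < m x)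
    (hlam : lam < 0)
    -- `f` is `λ`-harmonic: `L f = λ f`
    (hf : ∀ n, (1 / m n) * ∑' y, b n y * (f n - f y) = lam * f n)
    -- reciprocal edge weights are not summable
    (hrecip : ¬ Summable fun n => 1 / b n (n + 1))
    -- `f` is nonconstant and not identically zero
    (hnonconst : ¬ ∀ n k, f n = f k)
    (hnontriv : ∃ n, f n ≠ 0) :
    ¬ BddAbove (Set.range fun n => |f n|) := by
  -- b vanishes off edges
  have hb0 : ∀ x y, ¬ (y = x + 1 ∨ x = y + 1) → b x y = 0 := by
    intro x y h
    rcases (hb_nonneg x y).eq_or_lt with h' | h'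
    · exact h'.symm
    · exact absurd ((hb_adj x y).mp h') h
  have hBpos : ∀ n, 0 < b n (n + 1) := fun n => (hb_adj n (n + 1)).mpr (Or.inl rfl)
  -- rewrite hf with denominator cleared
  have hf' : ∀ n, (∑' y, b n y * (f n - f y)) = lam * m n * f n := by
    intro n
    have hm := (hm_pos n).ne'
    have h := hf n
    rw [one_div, inv_mul_eq_div, div_eq_iff hm] at h
    rw [h]; ring
  -- explicit equations
  have E0 : b 0 1 * (f 0 - f 1) = lam * m 0 * f 0 := by
    have h : (∑' y, b 0 y * (f 0 - f y)) = b 0 1 * (f 0 - f 1) := by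
      apply tsum_eq_single 1
      intro y hy
      rw [hb0 0 y (by omega), zero_mul]
    rw [← h]; exact hf' 0
  have En : ∀ n, b (n + 1) n * (f (n + 1) - f n)
      + b (n + 1) (n + 2) * (f (n + 1) - f (n + 2)) = lam * m (n + 1) * f (n + 1) := by
    intro n
    have h : (∑' y, b (n + 1) y * (f (n + 1) - f y))
        = ∑ y ∈ ({n, n + 2} : Finset ℕ), b (n + 1) y * (f (n + 1) - f y) := by
      apply tsum_eq_sum
      intro y hy
      simp only [Finset.mem_insert, Finset.mem_singleton] at hy
      rw [hb0 (n + 1) y (by omega), zero_mul]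
    rw [Finset.sum_pair (by omega)] at h
    rw [← h]; exact hf' (n + 1)
  -- f 0 ≠ 0
  have hf0 : f 0 ≠ 0 := by
    intro h0
    have key : ∀ n, f n = 0 ∧ f (n + 1) = 0 := by
      intro n
      induction n with
      | zero =>
        refine ⟨h0, ?_⟩
        have h := E0
        rw [h0] at h
        have hB := (hBpos 0).ne'
        have h2 : b 0 1 * (0 - f 1) = 0 := by rw [h]; ring
        rcases mul_eq_zero.mp h2 with h | h
        · exact absurd h hB
        · linarith
      | succ n ih =>
        refine ⟨ih.2, ?_⟩
        have hE := En n
        rw [ih.1, ih.2] at hE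
        have hB := (hBpos (n + 1)).ne'
        have h2 : b (n + 1) (n + 2) * (0 - f (n + 2)) = 0 := by
          linear_combination hE
        rcases mul_eq_zero.mp h2 with h | h
        · exact absurd h hB
        · linarith
    obtain ⟨n, hn⟩ := hnontriv
    exact hn (key n).1
  -- sign normalization
  set ε : ℝ := if 0 < f 0 then 1 else -1 with hε
  set g : ℕ → ℝ := fun n => ε * f n with hg
  have hg0 : 0 < g 0 := by
    rcases hf0.lt_or_gt with h | h
    · simp only [hg, hε, if_neg (not_lt.mpr h.le)]; nlinarith
    · simp only [hg, hε, if_pos h]; nlinarith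
  have hgabs : ∀ n, g n ≤ |f n| := by
    intro n
    have habs : |g n| = |f n| := by
      simp only [hg, abs_mul, hε]
      split <;> simp
    calc g n ≤ |g n| := le_abs_self _
      _ = |f n| := habs
  -- g satisfies the same equations
  have Eg0 : b 0 1 * (g 0 - g 1) = lam * m 0 * g 0 := by
    simp only [hg]; linear_combination ε * E0
  have Egn : ∀ n, b (n + 1) n * (g (n + 1) - g n)
      + b (n + 1) (n + 2) * (g (n + 1) - g (n + 2)) = lam * m (n + 1) * g (n + 1) := by
    intro n; simp only [hg]; linear_combination ε * En n
  -- the flow w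
  set w : ℕ → ℝ := fun n => b n (n + 1) * (g (n + 1) - g n) with hw
  have hwdef : ∀ n, w n = b n (n + 1) * (g (n + 1) - g n) := fun n => rfl
  have hw0 : w 0 = -(lam * m 0 * g 0) := by
    rw [hwdef 0]; linear_combination (-1 : ℝ) * Eg0
  have hwrec : ∀ n, w (n + 1) = w n - lam * m (n + 1) * g (n + 1) := by
    intro n
    have hsym : b (n + 1) n = b n (n + 1) := hb_symm _ _
    rw [hwdef (n + 1), hwdef n]
    linear_combination (-1 : ℝ) * Egn n + (g (n + 1) - g n) * hsym
  have hw0pos : 0 < w 0 := by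
    have h : 0 < -lam * (m 0 * g 0) := mul_pos (neg_pos.mpr hlam) (mul_pos (hm_pos 0) hg0)
    rw [hw0]; linarith
  -- main induction: positivity and monotone flow
  have key : ∀ n, 0 < g n ∧ w 0 ≤ w n := by
    intro n
    induction n with
    | zero => exact ⟨hg0, le_refl _⟩
    | succ n ih =>
      obtain ⟨hgn, hwn⟩ := ih
      have hwpos : 0 < w n := lt_of_lt_of_le hw0pos hwn
      have hB := hBpos n
      have hΔ : 0 < g (n + 1) - g n := by
        rw [hwdef n] at hwpos
        by_contra h
        push_neg at h
        nlinarith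
      have hg1 : 0 < g (n + 1) := by linarith
      refine ⟨hg1, ?_⟩
      rw [hwrec n]
      have h : 0 < -lam * (m (n + 1) * g (n + 1)) :=
        mul_pos (neg_pos.mpr hlam) (mul_pos (hm_pos (n + 1)) hg1)
      linarith
  -- growth estimate
  have grow : ∀ n, g 0 + w 0 * ∑ k ∈ Finset.range n, 1 / b k (k + 1) ≤ g n := by
    intro n
    induction n with
    | zero => simp
    | succ n ih =>
      rw [Finset.sum_range_succ]
      have hB := hBpos n
      have hwn := (key n).2
      have h1 : w n / b n (n + 1) = g (n + 1) - g n := by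
        rw [hwdef n, mul_comm, mul_div_assoc, div_self hB.ne', mul_one]
      have h2 : w 0 / b n (n + 1) ≤ w n / b n (n + 1) :=
        div_le_div_of_nonneg_right hwn hB.le
      have h3 : w 0 * (1 / b n (n + 1)) = w 0 / b n (n + 1) := by ring
      linarith
  -- conclude
  intro hbdd
  obtain ⟨M, hM⟩ := hbdd
  have hM' : ∀ n, |f n| ≤ M := fun n => hM ⟨n, rfl⟩
  have hdiv : Filter.Tendsto (fun n => ∑ k ∈ Finset.range n, 1 / b k (k + 1))
      Filter.atTop Filter.atTop :=
    (not_summable_iff_tendsto_nat_atTop_of_nonneg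
      (fun n => (one_div_pos.mpr (hBpos n)).le)).mp hrecip
  obtain ⟨N, hN⟩ := (Filter.tendsto_atTop.mp hdiv ((M - g 0) / w 0 + 1)).exists
  have hgN := grow N
  have hle : g N ≤ M := le_trans (hgabs N) (hM' N)
  have h1 : w 0 * ((M - g 0) / w 0 + 1) ≤ w 0 * ∑ k ∈ Finset.range N, 1 / b k (k + 1) :=
    mul_le_mul_of_nonneg_left hN hw0pos.le
  have h2 : w 0 * ((M - g 0) / w 0 + 1) = M - g 0 + w 0 := by
    field_simp
  linarith
end
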